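/- For all t ∈ (0,∞), x ∈ ℝ and h ∈ (0, (π/2)·exp(−(max(x,0))³)], it holds that ∫_c^∞ cos( h·exp((x + √t·y)³) ) · exp(−y²/2) dy ≤ 0, where c := ( (ln(π/(2h)))^{1/3} − x ) / √t. (Note that the constraint on h guarantees ln(π/(2h)) ≥ (max(x,0))³ ≥ 0, so the cube root is well defined.) -/

import Mathlib

open Real MeasureTheory Set Filter

noncomputable def auxS (x r y : ℝ) : ℝ := x + r * y
noncomputable def auxPhi (x r h y : ℝ) : ℝ := h * Real.exp ((auxS x r y) ^ 3)
noncomputable def auxDen (x r h y : ℝ) : ℝ := 3 * r * (auxS x r y) ^ 2 * auxPhi x r h y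
noncomputable def auxI (x r h y : ℝ) : ℝ := Real.cos (auxPhi x r h y) * Real.exp (-y ^ 2 / 2)
noncomputable def auxF (x r h y : ℝ) : ℝ :=
  (Real.sin (auxPhi x r h y) - 1) * (Real.exp (-y ^ 2 / 2) / auxDen x r h y)
noncomputable def auxP (x r h y : ℝ) : ℝ :=
  (Real.sin (auxPhi x r h y) - 1) *
    ((-(y * Real.exp (-y ^ 2 / 2)) * auxDen x r h y -
        Real.exp (-y ^ 2 / 2) *
          (3 * (r * r) * h * Real.exp ((auxS x r y) ^ 3) *
            (2 * auxS x r y + 3 * (auxS x r y) ^ 4))) / (auxDen x r h y) ^ 2)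

lemma auxI_continuous (x r h : ℝ) : Continuous (auxI x r h) := by
  unfold auxI auxPhi auxS; fun_prop

lemma auxI_integrable (x r h : ℝ) : Integrable (auxI x r h) := by
  have hg : Integrable (fun y : ℝ => Real.exp (-(1/2) * y ^ 2)) :=
    integrable_exp_neg_mul_sq (by norm_num)
  refine hg.mono' (auxI_continuous x r h).aestronglyMeasurable ?_
  filter_upwards with y
  rw [Real.norm_eq_abs, auxI, abs_mul, abs_of_pos (Real.exp_pos _)]
  have h1 : |Real.cos (auxPhi x r h y)| ≤ 1 := Real.abs_cos_le_one _
  have h2 : Real.exp (-y ^ 2 / 2) = Real.exp (-(1/2) * y ^ 2) := by ring_nf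
  rw [h2]
  nlinarith [Real.exp_pos (-(1/2) * y ^ 2), abs_nonneg (Real.cos (auxPhi x r h y))]

lemma auxDen_pos (x r h y : ℝ) (hr : 0 < r) (hh : 0 < h) (hs : 0 < auxS x r y) :
    0 < auxDen x r h y := by
  unfold auxDen auxPhi; positivity

lemma auxF_nonpos (x r h y : ℝ) (hr : 0 ≤ r) (hh : 0 ≤ h) : auxF x r h y ≤ 0 := by
  unfold auxF
  apply mul_nonpos_of_nonpos_of_nonneg
  · linarith [Real.sin_le_one (auxPhi x r h y)]
  · apply div_nonneg (Real.exp_pos _).le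
    unfold auxDen auxPhi; positivity

lemma auxP_nonneg (x r h y : ℝ) (hr : 0 < r) (hh : 0 < h) (hs0 : 0 ≤ auxS x r y)
    (hsx : x ≤ auxS x r y) : 0 ≤ auxP x r h y := by
  set a := auxS x r y with ha
  have hry : r * y = a - x := by rw [ha]; unfold auxS; ring
  unfold auxP
  rw [← ha]
  have hsin : Real.sin (auxPhi x r h y) - 1 ≤ 0 := by
    linarith [Real.sin_le_one (auxPhi x r h y)]
  have hq : (-(y * Real.exp (-y ^ 2 / 2)) * auxDen x r h y -
        Real.exp (-y ^ 2 / 2) *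
          (3 * (r * r) * h * Real.exp (a ^ 3) *
            (2 * a + 3 * a ^ 4))) / (auxDen x r h y) ^ 2 ≤ 0 := by
    apply div_nonpos_of_nonpos_of_nonneg _ (sq_nonneg _)
    have hden : auxDen x r h y = 3 * r * a ^ 2 * (h * Real.exp (a ^ 3)) := by
      unfold auxDen auxPhi; rw [← ha]
    rw [hden]
    have key : 0 ≤ y * a ^ 2 + r * (2 * a + 3 * a ^ 4) := by
      have h1 : 0 ≤ r * (y * a ^ 2 + r * (2 * a + 3 * a ^ 4)) := by
        have : r * (y * a ^ 2 + r * (2 * a + 3 * a ^ 4))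
            = (a - x) * a ^ 2 + r * r * (2 * a + 3 * a ^ 4) := by
          rw [← hry]; ring
        rw [this]
        nlinarith [sq_nonneg a, pow_nonneg hs0 4, mul_pos hr hr]
      exact (mul_nonneg_iff_of_pos_left hr).mp h1
    have hE := (Real.exp_pos (-y ^ 2 / 2)).le
    have he := (Real.exp_pos (a ^ 3)).le
    nlinarith [mul_nonneg (mul_nonneg (mul_nonneg hE hr.le) hh.le) (mul_nonneg he key)]
  nlinarith [mul_nonneg (neg_nonneg.2 hsin) (neg_nonneg.2 hq)]

lemma aux_hasDerivAt (x r h : ℝ) (hr : r ≠ 0) (hh : h ≠ 0) (y : ℝ) (hs : auxS x r y ≠ 0) :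
    HasDerivAt (auxF x r h) (auxI x r h y + auxP x r h y) y := by
  have hden : auxDen x r h y ≠ 0 := by
    unfold auxDen auxPhi
    positivity
  have hS : HasDerivAt (fun y => auxS x r y) r y := by
    simpa [auxS] using ((hasDerivAt_id y).const_mul r).const_add x
  have hcube : HasDerivAt (fun y => (auxS x r y) ^ 3) (3 * (auxS x r y) ^ 2 * r) y := by
    have := hS.pow 3
    norm_num at this
    exact this
  have hPhi : HasDerivAt (fun y => auxPhi x r h y)
      (h * (Real.exp ((auxS x r y) ^ 3) * (3 * (auxS x r y) ^ 2 * r))) y :=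
    (hcube.exp).const_mul h
  have hsq : HasDerivAt (fun y => (auxS x r y) ^ 2) (2 * auxS x r y * r) y := by
    have := hS.pow 2
    norm_num at this
    exact this
  have hDen : HasDerivAt (fun y => auxDen x r h y)
      ((3 * r) * ((2 * auxS x r y * r) * auxPhi x r h y +
        (auxS x r y) ^ 2 *
          (h * (Real.exp ((auxS x r y) ^ 3) * (3 * (auxS x r y) ^ 2 * r))))) y := by
    have heq : (fun y => auxDen x r h y)
        = fun y => (3 * r) * ((auxS x r y) ^ 2 * auxPhi x r h y) := by
      funext z; unfold auxDen; ring
    rw [heq]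
    exact (hsq.mul hPhi).const_mul (3 * r)
  have hE : HasDerivAt (fun y : ℝ => Real.exp (-y ^ 2 / 2))
      (Real.exp (-y ^ 2 / 2) * (-(2 * y) / 2)) y := by
    have h1 : HasDerivAt (fun y : ℝ => -y ^ 2 / 2) (-(2 * y) / 2) y := by
      exact ((hasDerivAt_pow 2 y).neg.div_const 2).congr_deriv (by norm_num)
    exact h1.exp
  have hg := hE.div hDen hden
  have hsin : HasDerivAt (fun y => Real.sin (auxPhi x r h y) - 1)
      (Real.cos (auxPhi x r h y) *
        (h * (Real.exp ((auxS x r y) ^ 3) * (3 * (auxS x r y) ^ 2 * r)))) y :=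
    (hPhi.sin).sub_const 1
  have hmain := hsin.mul hg
  have hFeq : auxF x r h = fun y =>
      (Real.sin (auxPhi x r h y) - 1) * (Real.exp (-y ^ 2 / 2) / auxDen x r h y) := rfl
  rw [hFeq]
  refine hmain.congr_deriv ?_
  simp only [Pi.div_apply]
  unfold auxI auxP
  have hdeneq : auxDen x r h y = 3 * r * (auxS x r y) ^ 2 * (h * Real.exp ((auxS x r y) ^ 3)) := by
    unfold auxDen auxPhi; ring
  have hphieq : auxPhi x r h y = h * Real.exp ((auxS x r y) ^ 3) := rfl
  rw [hphieq, hdeneq]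
  have hexp : Real.exp ((auxS x r y) ^ 3) ≠ 0 := (Real.exp_pos _).ne'
  field_simp

lemma auxP_continuousOn (x r h : ℝ) (s : Set ℝ) (hs : ∀ y ∈ s, auxDen x r h y ≠ 0) :
    ContinuousOn (auxP x r h) s := by
  apply ContinuousOn.mul
  · unfold auxPhi auxS; fun_prop
  · apply ContinuousOn.div
    · unfold auxDen auxPhi auxS; fun_prop
    · unfold auxDen auxPhi auxS; fun_prop
    · exact fun y hy => pow_ne_zero 2 (hs y hy)

lemma aux_interval (x r h : ℝ) (hr : 0 < r) (hh : 0 < h) (c' A : ℝ) (hcA : c' ≤ A)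
    (hspos : ∀ y ∈ Set.Icc c' A, 0 < auxS x r y)
    (hsx : ∀ y ∈ Set.Icc c' A, x ≤ auxS x r y) :
    ∫ y in c'..A, auxI x r h y ≤ -auxF x r h c' := by
  have hderiv : ∀ y ∈ Set.uIcc c' A,
      HasDerivAt (auxF x r h) (auxI x r h y + auxP x r h y) y := by
    intro y hy
    rw [Set.uIcc_of_le hcA] at hy
    exact aux_hasDerivAt x r h hr.ne' hh.ne' y (hspos y hy).ne'
  have hIint : IntervalIntegrable (auxI x r h) volume c' A :=
    (auxI_continuous x r h).intervalIntegrable c' A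
  have hPint : IntervalIntegrable (auxP x r h) volume c' A := by
    apply ContinuousOn.intervalIntegrable
    rw [Set.uIcc_of_le hcA]
    exact auxP_continuousOn x r h _
      (fun y hy => (auxDen_pos x r h y hr hh (hspos y hy)).ne')
  have hWint : IntervalIntegrable (fun y => auxI x r h y + auxP x r h y) volume c' A :=
    hIint.add hPint
  have heq : ∫ y in c'..A, (auxI x r h y + auxP x r h y)
      = auxF x r h A - auxF x r h c' :=
    intervalIntegral.integral_eq_sub_of_hasDerivAt hderiv hWint
  have hsum : ∫ y in c'..A, (auxI x r h y + auxP x r h y)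
      = (∫ y in c'..A, auxI x r h y) + ∫ y in c'..A, auxP x r h y :=
    intervalIntegral.integral_add hIint hPint
  have hPnn : 0 ≤ ∫ y in c'..A, auxP x r h y := by
    apply intervalIntegral.integral_nonneg hcA
    intro y hy
    exact auxP_nonneg x r h y hr hh (hspos y hy).le (hsx y hy)
  have hFA : auxF x r h A ≤ 0 := auxF_nonpos x r h A hr.le hh.le
  linarith [heq, hsum]

set_option maxHeartbeats 1000000 in
/-- for all `t ∈ (0,∞)`, `x ∈ ℝ` and
`h ∈ (0, (π/2)·exp(−(max x 0)³)]`, it holds that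
`∫_c^∞ cos(h·exp((x + √t·y)³)) · exp(−y²/2) dy ≤ 0`, where
`c = ((ln(π/(2h)))^{1/3} − x)/√t`. -/
theorem integral_cos_exp_cube_mul_gaussian_nonpos
    (t x h : ℝ) (ht : 0 < t) (hh : 0 < h)
    (hh' : h ≤ (π / 2) * Real.exp (-(max x 0) ^ 3)) :
    ∫ y in Set.Ioi (((Real.log (π / (2 * h))) ^ ((1:ℝ)/3) - x) / Real.sqrt t),
        Real.cos (h * Real.exp ((x + Real.sqrt t * y) ^ 3)) * Real.exp (-y ^ 2 / 2) ≤ 0 := by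
  have hπ := Real.pi_pos
  set r := Real.sqrt t with hrdef
  have hr0 : 0 < r := Real.sqrt_pos.mpr ht
  set L := Real.log (π / (2 * h)) with hLdef
  set M := max x 0 with hMdef
  have hM0 : 0 ≤ M := le_max_right _ _
  have hxM : x ≤ M := le_max_left _ _
  have hexpM : h * Real.exp (M ^ 3) ≤ π / 2 := by
    have h1 : Real.exp (-(M ^ 3)) * Real.exp (M ^ 3) = 1 := by
      rw [← Real.exp_add]; simp
    nlinarith [Real.exp_pos (M ^ 3), Real.exp_pos (-(M ^ 3)), hh']
  have hML : M ^ 3 ≤ L := by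
    rw [hLdef, Real.le_log_iff_exp_le (by positivity)]
    rw [le_div_iff₀ (by positivity)]
    nlinarith [Real.exp_pos (M ^ 3)]
  have hL0 : 0 ≤ L := le_trans (by positivity) hML
  set s₀ := L ^ ((1:ℝ)/3) with hs0def
  have hs₀0 : 0 ≤ s₀ := Real.rpow_nonneg hL0 _
  have hs₀cube : s₀ ^ 3 = L := by
    rw [hs0def, ← Real.rpow_natCast (L ^ ((1:ℝ)/3)) 3, ← Real.rpow_mul hL0]
    norm_num
  have hs₀M : M ≤ s₀ := by
    have hM3 : M = ((M ^ 3 : ℝ)) ^ ((1:ℝ)/3) := by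
      rw [← Real.rpow_natCast M 3, ← Real.rpow_mul hM0]
      norm_num
    rw [hM3, hs0def]
    exact Real.rpow_le_rpow (by positivity) hML (by norm_num)
  have hπ2 : h * Real.exp (s₀ ^ 3) = π / 2 := by
    rw [hs₀cube, hLdef, Real.exp_log (by positivity)]
    field_simp
  set c := (s₀ - x) / r with hcdef
  have hrc : r * c = s₀ - x := by
    rw [hcdef, mul_comm, div_mul_cancel₀ _ hr0.ne']
  show ∫ y in Set.Ioi c, auxI x r h y ≤ 0
  -- the bound function
  set B : ℝ → ℝ := fun c' => (c' - c) +
    3 * h * r / 2 * Real.exp ((auxS x r c') ^ 3) * (auxS x r c') ^ 2 * (c' - c) ^ 2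
    with hBdef
  have hBcont : Continuous B := by
    rw [hBdef]; unfold auxS; fun_prop
  have hBtend : Tendsto B (nhdsWithin c (Set.Ioi c)) (nhds 0) := by
    have h1 : Tendsto B (nhds c) (nhds (B c)) := hBcont.continuousAt
    have h2 : B c = 0 := by rw [hBdef]; simp
    rw [h2] at h1
    exact h1.mono_left nhdsWithin_le_nhds
  refine ge_of_tendsto hBtend ?_
  filter_upwards [self_mem_nhdsWithin] with c' hc'
  have hcc' : c < c' := hc'
  set a := auxS x r c' with hadef
  have haval : a = x + r * c' := rfl
  have has₀ : a - s₀ = r * (c' - c) := by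
    have hmul : r * (c' - c) = r * c' - r * c := by ring
    rw [haval, hmul, hrc]; ring
  have has₀' : s₀ < a := by
    have hpos : 0 < r * (c' - c) := mul_pos hr0 (by linarith)
    linarith [has₀]
  have ha0 : 0 < a := lt_of_le_of_lt hs₀0 has₀'
  have hax : x ≤ a := le_trans hxM (le_trans hs₀M has₀'.le)
  -- split the integral
  have hint : IntegrableOn (auxI x r h) (Set.Ioi c) := (auxI_integrable x r h).integrableOn
  have hint1 : IntegrableOn (auxI x r h) (Set.Ioc c c') := (auxI_integrable x r h).integrableOn
  have hint2 : IntegrableOn (auxI x r h) (Set.Ioi c') := (auxI_integrable x r h).integrableOn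
  have hsplit : ∫ y in Set.Ioi c, auxI x r h y
      = (∫ y in Set.Ioc c c', auxI x r h y) + ∫ y in Set.Ioi c', auxI x r h y := by
    rw [← setIntegral_union (Set.Ioc_disjoint_Ioi le_rfl) measurableSet_Ioi hint1 hint2,
      Set.Ioc_union_Ioi_eq_Ioi hcc'.le]
  -- first piece ≤ c' - c
  have hIoc : ∫ y in Set.Ioc c c', auxI x r h y ≤ c' - c := by
    have hb : ‖∫ y in Set.Ioc c c', auxI x r h y‖ ≤ 1 * (volume (Set.Ioc c c')).toReal := by
      apply norm_setIntegral_le_of_norm_le_const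
      · rw [Real.volume_Ioc]; exact ENNReal.ofReal_lt_top
      · intro y _
        rw [Real.norm_eq_abs, auxI, abs_mul, abs_of_pos (Real.exp_pos _)]
        have h1 : |Real.cos (auxPhi x r h y)| ≤ 1 := Real.abs_cos_le_one _
        have h2 : Real.exp (-y ^ 2 / 2) ≤ 1 := by
          rw [show (1:ℝ) = Real.exp 0 by simp]
          exact Real.exp_le_exp.mpr (by nlinarith [sq_nonneg y])
        nlinarith [Real.exp_pos (-y ^ 2 / 2), abs_nonneg (Real.cos (auxPhi x r h y))]
    rw [Real.volume_Ioc, ENNReal.toReal_ofReal (by linarith), one_mul] at hb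
    exact le_trans (le_abs_self _) hb
  -- second piece ≤ -F c'
  have hIoi : ∫ y in Set.Ioi c', auxI x r h y ≤ -auxF x r h c' := by
    have htend := intervalIntegral_tendsto_integral_Ioi c' hint2 (tendsto_id (α := ℝ))
    refine le_of_tendsto htend ?_
    filter_upwards [eventually_ge_atTop c'] with A hA
    apply aux_interval x r h hr0 hh c' A hA
    · intro y hy
      have h1 : auxS x r y = x + r * y := rfl
      have h2 : r * c' ≤ r * y := mul_le_mul_of_nonneg_left hy.1 hr0.le
      rw [h1]; rw [haval] at ha0; linarith
    · intro y hy
      have h1 : auxS x r y = x + r * y := rfl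
      have h2 : r * c' ≤ r * y := mul_le_mul_of_nonneg_left hy.1 hr0.le
      rw [h1]; rw [haval] at hax; linarith
  -- bound -F c'
  have hFbound : -auxF x r h c'
      ≤ 3 * h * r / 2 * Real.exp (a ^ 3) * a ^ 2 * (c' - c) ^ 2 := by
    have hphic : auxPhi x r h c' = h * Real.exp (a ^ 3) := rfl
    have hphige : π / 2 ≤ auxPhi x r h c' := by
      rw [hphic, ← hπ2]
      have h3 : Real.exp (s₀ ^ 3) ≤ Real.exp (a ^ 3) :=
        Real.exp_le_exp.mpr (pow_le_pow_left₀ hs₀0 has₀'.le 3)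
      nlinarith [h3]
    have h1sin : 1 - Real.sin (auxPhi x r h c') ≤ (auxPhi x r h c' - π / 2) ^ 2 / 2 := by
      have h0 := Real.one_sub_sq_div_two_le_cos (x := auxPhi x r h c' - π / 2)
      rw [Real.cos_sub_pi_div_two] at h0
      linarith
    have hdiff : auxPhi x r h c' - π / 2
        ≤ h * Real.exp (a ^ 3) * (3 * a ^ 2 * (a - s₀)) := by
      rw [hphic, ← hπ2]
      have hexpb : Real.exp (a ^ 3) - Real.exp (s₀ ^ 3)
          ≤ Real.exp (a ^ 3) * (a ^ 3 - s₀ ^ 3) := by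
        have := Real.add_one_le_exp (s₀ ^ 3 - a ^ 3)
        have h2 : Real.exp (s₀ ^ 3 - a ^ 3) * Real.exp (a ^ 3) = Real.exp (s₀ ^ 3) := by
          rw [← Real.exp_add]; ring_nf
        nlinarith [Real.exp_pos (a ^ 3)]
      have hcube : a ^ 3 - s₀ ^ 3 ≤ 3 * a ^ 2 * (a - s₀) := by
        nlinarith [has₀'.le, hs₀0, sq_nonneg (a - s₀), sq_nonneg (a + s₀)]
      nlinarith [Real.exp_pos (a ^ 3), hh]
    have hden : auxDen x r h c' = 3 * r * a ^ 2 * (h * Real.exp (a ^ 3)) := by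
      unfold auxDen auxPhi; rw [← hadef]
    have hdenpos : 0 < auxDen x r h c' := by
      rw [hden]; positivity
    have hFval : -auxF x r h c'
        = (1 - Real.sin (auxPhi x r h c')) * Real.exp (-c' ^ 2 / 2) / auxDen x r h c' := by
      unfold auxF; ring
    rw [hFval]
    have hE1 : Real.exp (-c' ^ 2 / 2) ≤ 1 := by
      rw [show (1:ℝ) = Real.exp 0 by simp]
      exact Real.exp_le_exp.mpr (by nlinarith [sq_nonneg c'])
    have hsin01 : 0 ≤ 1 - Real.sin (auxPhi x r h c') := by
      linarith [Real.sin_le_one (auxPhi x r h c')]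
    have hnum : (1 - Real.sin (auxPhi x r h c')) * Real.exp (-c' ^ 2 / 2)
        ≤ (h * Real.exp (a ^ 3) * (3 * a ^ 2 * (a - s₀))) ^ 2 / 2 := by
      have hsq : (auxPhi x r h c' - π / 2) ^ 2
          ≤ (h * Real.exp (a ^ 3) * (3 * a ^ 2 * (a - s₀))) ^ 2 := by
        apply sq_le_sq'
        · nlinarith [hphige, Real.exp_pos (a ^ 3), hh, sq_nonneg a, has₀'.le]
        · exact hdiff
      nlinarith [Real.exp_pos (-c' ^ 2 / 2), hsin01, h1sin]
    calc (1 - Real.sin (auxPhi x r h c')) * Real.exp (-c' ^ 2 / 2) / auxDen x r h c'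
        ≤ ((h * Real.exp (a ^ 3) * (3 * a ^ 2 * (a - s₀))) ^ 2 / 2) / auxDen x r h c' := by
          gcongr
      _ = 3 * h * r / 2 * Real.exp (a ^ 3) * a ^ 2 * (c' - c) ^ 2 := by
          rw [hden, has₀]
          have hexp0 : Real.exp (a ^ 3) ≠ 0 := (Real.exp_pos _).ne'
          field_simp
  have hBc' : B c' = (c' - c) + 3 * h * r / 2 * Real.exp (a ^ 3) * a ^ 2 * (c' - c) ^ 2 := rfl
  rw [hsplit, hBc']
  linarith
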